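/- For the ring of cliques R_{b,q} with b ≥ 3 and q ≥ 4 even, taking k = q/2 (so α_{q/2} = −2 and c^{q/2,q}_j = (−1)^j), the vectors c^{q/2,q} ⊗ (ξ₁^{(q/2)} e₁ + g₁) and c^{q/2,q} ⊗ (ξ₂^{(q/2)} e₁ + g₁) are nonzero and satisfy Â(c^{q/2,q} ⊗ (ξ_i^{(q/2)} e₁ + g₁)) = λ_i^{(q/2)} · (c^{q/2,q} ⊗ (ξ_i^{(q/2)} e₁ + g₁)) for i = 1, 2. -/

import Mathlib

open Matrix Finset

/-- Adjacency matrix of the ring of cliques `R_{b,q}`: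
`A = I_q ⊗ (1_b 1_bᵀ − I_b) + C_q ⊗ e₁e₁ᵀ`, written entrywise.  Vertices are pairs
`(i, a)` where `i : Fin q` is the block and `a : Fin b` the position within the block;
`a = 0` is the corner vertex of the block. -/
noncomputable def rocAdj (b q : ℕ) : Matrix (Fin q × Fin b) (Fin q × Fin b) ℝ :=
  Matrix.of fun p r =>
    (if p.1 = r.1 ∧ p.2 ≠ r.2 then (1 : ℝ) else 0) +
    (if ((p.1.val + 1) % q = r.1.val ∨ (r.1.val + 1) % q = p.1.val) ∧
        p.2.val = 0 ∧ r.2.val = 0 then (1 : ℝ) else 0)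

/-- Degrees in `R_{b,q}`: the corner of each block has degree `b+1`, internal
vertices have degree `b−1`. -/
noncomputable def rocDeg (b q : ℕ) (p : Fin q × Fin b) : ℝ :=
  if p.2.val = 0 then (b : ℝ) + 1 else (b : ℝ) - 1

/-- Normalized adjacency matrix `Â = D^{−1/2} A D^{−1/2}` of `R_{b,q}`. -/
noncomputable def rocAhat (b q : ℕ) : Matrix (Fin q × Fin b) (Fin q × Fin b) ℝ :=
  Matrix.diagonal (fun p => 1 / Real.sqrt (rocDeg b q p)) * rocAdj b q *
    Matrix.diagonal (fun p => 1 / Real.sqrt (rocDeg b q p))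

/-- `α_k = 2 cos(2πk/q)`. -/
noncomputable def rocAlpha (q k : ℕ) : ℝ := 2 * Real.cos (2 * Real.pi * k / q)

/-- `β_k = (1/2)(α_k √((b−1)/(b+1)) − √(b²−1) + √((b+1)/(b−1)))`. -/
noncomputable def rocBeta (b q k : ℕ) : ℝ :=
  (1 / 2) * (rocAlpha q k * Real.sqrt (((b : ℝ) - 1) / ((b : ℝ) + 1)) -
    Real.sqrt ((b : ℝ) ^ 2 - 1) + Real.sqrt (((b : ℝ) + 1) / ((b : ℝ) - 1)))

/-- `ξ₁⁽ᵏ⁾ = β_k + √(β_k² + (b−1))`. -/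
noncomputable def rocXi1 (b q k : ℕ) : ℝ :=
  rocBeta b q k + Real.sqrt ((rocBeta b q k) ^ 2 + ((b : ℝ) - 1))

/-- `ξ₂⁽ᵏ⁾ = β_k − √(β_k² + (b−1))`. -/
noncomputable def rocXi2 (b q k : ℕ) : ℝ :=
  rocBeta b q k - Real.sqrt ((rocBeta b q k) ^ 2 + ((b : ℝ) - 1))

/-- `λ₁⁽ᵏ⁾ = ξ₁⁽ᵏ⁾/√(b²−1) + 1 − 1/(b−1)`. -/
noncomputable def rocLam1 (b q k : ℕ) : ℝ :=
  rocXi1 b q k / Real.sqrt ((b : ℝ) ^ 2 - 1) + 1 - 1 / ((b : ℝ) - 1)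

/-- `λ₂⁽ᵏ⁾ = ξ₂⁽ᵏ⁾/√(b²−1) + 1 − 1/(b−1)`. -/
noncomputable def rocLam2 (b q k : ℕ) : ℝ :=
  rocXi2 b q k / Real.sqrt ((b : ℝ) ^ 2 - 1) + 1 - 1 / ((b : ℝ) - 1)

/-- Periodic cosine vector `c^{k,q}_j = cos(2πkj/q)`, `j = 1, …, q`;
for `k = q/2` (with `q` even) this is `c_j = (−1)^j`. -/
noncomputable def cvec (q k : ℕ) : Fin q → ℝ :=
  fun j => Real.cos (2 * Real.pi * k * (j.val + 1) / q)

/-- Block vector `ξ e₁ + g₁ ∈ ℝ^b`. -/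
noncomputable def blockVec (b : ℕ) (ξ : ℝ) : Fin b → ℝ :=
  fun a => if a.val = 0 then ξ else 1

/-- Kronecker (tensor) product of vectors: `(y ⊗ z)_{(i,a)} = y_i z_a`. -/
noncomputable def vkron {q b : ℕ} (y : Fin q → ℝ) (z : Fin b → ℝ) : Fin q × Fin b → ℝ :=
  fun p => y p.1 * z p.2


private lemma roc_cos_nat_pi (n : ℕ) : Real.cos (n * Real.pi) = (-1 : ℝ) ^ n := by
  simpa using Real.cos_nat_mul_pi_sub 0 n

private lemma roc_cvec_half (q : ℕ) (hq : 2 ≤ q) (hqe : Even q) (j : Fin q) :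
    cvec q (q / 2) j = (-1 : ℝ) ^ (j.val + 1) := by
  unfold cvec
  have hq0 : (q : ℝ) ≠ 0 := by positivity
  have h2 : ((q / 2 : ℕ) : ℝ) * 2 = q := by
    obtain ⟨m, rfl⟩ := hqe
    have hm : (m + m) / 2 = m := by omega
    rw [hm]; push_cast; ring
  have key : 2 * Real.pi * (q / 2 : ℕ) * (j.val + 1) / q = ((j.val + 1 : ℕ) : ℝ) * Real.pi := by
    rw [div_eq_iff hq0]; push_cast
    linear_combination (Real.pi * ((j.val : ℝ) + 1)) * h2
  rw [key, roc_cos_nat_pi]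

private lemma roc_alpha_half (q : ℕ) (hq : 2 ≤ q) (hqe : Even q) : rocAlpha q (q / 2) = -2 := by
  unfold rocAlpha
  have hq0 : (q : ℝ) ≠ 0 := by positivity
  have h2 : ((q / 2 : ℕ) : ℝ) * 2 = q := by
    obtain ⟨m, rfl⟩ := hqe
    have hm : (m + m) / 2 = m := by omega
    rw [hm]; push_cast; ring
  have key : 2 * Real.pi * (q / 2 : ℕ) / q = Real.pi := by
    rw [div_eq_iff hq0]; linear_combination Real.pi * h2
  rw [key, Real.cos_pi]; ring

private lemma roc_neg_one_pow_mod (q n : ℕ) (hqe : Even q) :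
    ((-1 : ℝ)) ^ (n % q) = (-1 : ℝ) ^ n := by
  conv_rhs => rw [← Nat.div_add_mod n q]
  rw [pow_add, pow_mul, (hqe.neg_one_pow : ((-1 : ℝ)) ^ q = 1), one_pow, one_mul]

private lemma roc_sum_block (b : ℕ) (hb : 1 ≤ b) (g : Fin b → ℝ) (x y : ℝ)
    (h0 : ∀ c : Fin b, c.val = 0 → g c = x) (h1 : ∀ c : Fin b, c.val ≠ 0 → g c = y) :
    ∑ c, g c = x + ((b : ℝ) - 1) * y := by
  obtain ⟨m, rfl⟩ : ∃ m, b = m + 1 := ⟨b - 1, by omega⟩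
  rw [Fin.sum_univ_succ, h0 0 rfl]
  have h : ∀ k : Fin m, g k.succ = y := fun k => h1 _ (by simp)
  simp only [h, Finset.sum_const, Finset.card_univ, Fintype.card_fin, nsmul_eq_mul]
  push_cast; ring

private lemma roc_eig (b q : ℕ) (hb : 3 ≤ b) (hq : 4 ≤ q) (hqe : Even q) (xi lam : ℝ)
    (h1 : ((b : ℝ) - 1) / (Real.sqrt ((b : ℝ) - 1) * Real.sqrt ((b : ℝ) + 1))
        - 2 * xi / ((b : ℝ) + 1) = lam * xi)
    (h2 : xi / (Real.sqrt ((b : ℝ) - 1) * Real.sqrt ((b : ℝ) + 1))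
        + ((b : ℝ) - 2) / ((b : ℝ) - 1) = lam) :
    (rocAhat b q).mulVec (vkron (cvec q (q / 2)) (blockVec b xi)) =
      lam • vkron (cvec q (q / 2)) (blockVec b xi) := by
  haveI : NeZero q := ⟨by omega⟩
  haveI : NeZero b := ⟨by omega⟩
  have hbR : (3 : ℝ) ≤ (b : ℝ) := by exact_mod_cast hb
  set s := Real.sqrt ((b : ℝ) - 1) with hs_def
  set t := Real.sqrt ((b : ℝ) + 1) with ht_def
  have hs_pos : 0 < s := Real.sqrt_pos.mpr (by linarith)
  have ht_pos : 0 < t := Real.sqrt_pos.mpr (by linarith)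
  have hs2 : s ^ 2 = (b : ℝ) - 1 := Real.sq_sqrt (by linarith)
  have ht2 : t ^ 2 = (b : ℝ) + 1 := Real.sq_sqrt (by linarith)
  set c : Fin q → ℝ := cvec q (q / 2) with hc_def
  have hc : ∀ j : Fin q, c j = (-1 : ℝ) ^ (j.val + 1) := roc_cvec_half q (by omega) hqe
  have hvadd : ∀ i : Fin q, ((i + 1 : Fin q)).val = (i.val + 1) % q := by
    intro i; rw [Fin.add_def, Fin.val_one']
    simp [Nat.mod_eq_of_lt (show 1 < q by omega)]
  have hvsub : ∀ i : Fin q, ((i - 1 : Fin q)).val = (i.val + (q - 1)) % q := by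
    intro i; rw [Fin.sub_def, Fin.val_one']
    simp [Nat.mod_eq_of_lt (show 1 < q by omega), Nat.add_comm]
  have hcadd : ∀ i : Fin q, c (i + 1) = -c i := by
    intro i
    rw [hc, hc, hvadd, pow_succ, pow_succ, roc_neg_one_pow_mod q _ hqe]
    ring
  have hcsub : ∀ i : Fin q, c (i - 1) = -c i := by
    intro i
    rw [hc, hc, hvsub, pow_succ, pow_succ, roc_neg_one_pow_mod q _ hqe, pow_add]
    have hodd : (-1 : ℝ) ^ (q - 1) = -1 :=
      Odd.neg_one_pow (Nat.Even.sub_odd (by omega) hqe odd_one)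
    rw [hodd]; ring
  set v : Fin q × Fin b → ℝ := vkron c (blockVec b xi) with hv_def
  set u : Fin q × Fin b → ℝ := fun r => (1 / Real.sqrt (rocDeg b q r)) * v r with hu_def
  have hdiag : (Matrix.diagonal fun p : Fin q × Fin b =>
      1 / Real.sqrt (rocDeg b q p)).mulVec v = u :=
    funext fun r => Matrix.mulVec_diagonal _ _ _
  have hu : ∀ (j : Fin q) (cc : Fin b),
      u (j, cc) = if cc.val = 0 then c j * xi / t else c j / s := by
    intro j cc
    by_cases h : cc.val = 0
    · rw [show u (j, cc) = 1 / Real.sqrt (rocDeg b q (j, cc)) * v (j, cc) from rfl,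
        show rocDeg b q (j, cc) = (b : ℝ) + 1 from by simp [rocDeg, h],
        show v (j, cc) = c j * xi from by simp [hv_def, vkron, blockVec, h],
        if_pos h, ← ht_def]
      ring
    · rw [show u (j, cc) = 1 / Real.sqrt (rocDeg b q (j, cc)) * v (j, cc) from rfl,
        show rocDeg b q (j, cc) = (b : ℝ) - 1 from by simp [rocDeg, h],
        show v (j, cc) = c j * 1 from by simp [hv_def, vkron, blockVec, h],
        if_neg h, ← hs_def]
      ring
  funext p
  obtain ⟨i, a⟩ := p
  simp only [Pi.smul_apply, smul_eq_mul]
  rw [rocAhat, ← Matrix.mulVec_mulVec, ← Matrix.mulVec_mulVec, hdiag, Matrix.mulVec_diagonal]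
  have hM : (rocAdj b q).mulVec u (i, a)
      = ((∑ cc : Fin b, u (i, cc)) - u (i, a))
        + (if a.val = 0 then u (i + 1, (0 : Fin b)) + u (i - 1, (0 : Fin b)) else 0) := by
    rw [show (rocAdj b q).mulVec u (i, a)
        = ∑ r : Fin q × Fin b, rocAdj b q (i, a) r * u r from rfl]
    rw [Fintype.sum_prod_type]
    simp only [rocAdj, Matrix.of_apply, add_mul, ite_mul, one_mul, zero_mul,
      Finset.sum_add_distrib]
    congr 1
    · simp only [ite_and, Finset.sum_ite_irrel, Finset.sum_const_zero, Finset.sum_ite_eq,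
        Finset.mem_univ, if_true]
      rw [Finset.sum_congr rfl (fun cc _ => show (if a ≠ cc then u (i, cc) else 0)
          = u (i, cc) - (if a = cc then u (i, cc) else 0) by
            by_cases h : a = cc <;> simp [h])]
      rw [Finset.sum_sub_distrib]
      simp
    · by_cases ha : a.val = 0
      · rw [if_pos ha]
        simp only [ha, eq_self_iff_true, true_and]
        have hcond : ∀ j : Fin q,
            ((i.val + 1) % q = j.val ∨ (j.val + 1) % q = i.val) ↔ (j = i + 1 ∨ j = i - 1) := by
          intro j
          have e1 : ((i.val + 1) % q = j.val) ↔ j = i + 1 := by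
            rw [Fin.ext_iff, hvadd]; exact eq_comm
          have e2 : ((j.val + 1) % q = i.val) ↔ j = i - 1 := by
            rw [show (j.val + 1) % q = ((j + 1 : Fin q)).val from (hvadd j).symm, Fin.val_inj]
            exact ⟨fun h => by rw [← h]; open Fin.CommRing in ring, fun h => by rw [h]; open Fin.CommRing in ring⟩
          exact or_congr e1 e2
        have hne : (i + 1 : Fin q) ≠ i - 1 := by
          intro h
          have h3 : ((1 : Fin q) + 1) = 0 := by
            have := sub_eq_zero_of_eq h
            calc (1 : Fin q) + 1 = (i + 1) - (i - 1) := by open Fin.CommRing in ring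
            _ = 0 := this
          have h4 := congrArg Fin.val h3
          rw [hvadd 1, Fin.val_one'] at h4
          rw [Nat.mod_eq_of_lt (show 1 < q by omega)] at h4
          rw [Nat.mod_eq_of_lt (show 1 + 1 < q by omega)] at h4
          simp at h4
        calc ∑ j : Fin q, ∑ cc : Fin b,
              (if ((i.val + 1) % q = j.val ∨ (j.val + 1) % q = i.val) ∧ cc.val = 0
                then u (j, cc) else 0)
            = ∑ j : Fin q, ((if j = i + 1 then u (j, (0 : Fin b)) else 0)
                + (if j = i - 1 then u (j, (0 : Fin b)) else 0)) := by
              refine Finset.sum_congr rfl fun j _ => ?_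
              rw [show (∑ cc : Fin b,
                  (if ((i.val + 1) % q = j.val ∨ (j.val + 1) % q = i.val) ∧ cc.val = 0
                    then u (j, cc) else 0))
                  = (if ((i.val + 1) % q = j.val ∨ (j.val + 1) % q = i.val)
                    then u (j, (0 : Fin b)) else 0) from ?_]
              · rw [if_congr (hcond j) rfl rfl]
                by_cases h1 : j = i + 1
                · rw [if_pos (Or.inl h1), if_pos h1, if_neg (by rw [h1]; exact hne), add_zero]
                · by_cases h2 : j = i - 1
                  · rw [if_pos (Or.inr h2), if_neg h1, if_pos h2, zero_add]
                  · rw [if_neg (by tauto), if_neg h1, if_neg h2, add_zero]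
              · simp only [ite_and, Finset.sum_ite_irrel, Finset.sum_const_zero]
                congr 1
                rw [show (∑ cc : Fin b, if cc.val = 0 then u (j, cc) else 0)
                    = ∑ cc : Fin b, if cc = 0 then u (j, cc) else 0 from
                  Finset.sum_congr rfl fun cc _ =>
                    if_congr (by rw [Fin.ext_iff]; simp) rfl rfl]
                simp [Finset.sum_ite_eq']
            _ = u (i + 1, (0 : Fin b)) + u (i - 1, (0 : Fin b)) := by
              rw [Finset.sum_add_distrib]
              simp [Finset.sum_ite_eq']
      · rw [if_neg ha]
        apply Finset.sum_eq_zero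
        intro j _
        apply Finset.sum_eq_zero
        intro cc _
        rw [if_neg (by tauto)]
  rw [hM]
  have hrow : ∑ cc : Fin b, u (i, cc) = (c i * xi / t) + ((b : ℝ) - 1) * (c i / s) :=
    roc_sum_block b (by omega) _ _ _
      (fun cc h => by rw [hu i cc, if_pos h])
      (fun cc h => by rw [hu i cc, if_neg h])
  by_cases ha : a.val = 0
  · have hdeg : rocDeg b q (i, a) = (b : ℝ) + 1 := by simp [rocDeg, ha]
    have hva : v (i, a) = c i * xi := by
      simp only [hv_def, vkron, blockVec]; rw [if_pos ha]
    have hua : u (i, a) = c i * xi / t := by rw [hu i a, if_pos ha]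
    have h00 : u (i + 1, (0 : Fin b)) = -(c i) * xi / t := by
      rw [hu (i + 1) 0, if_pos (show ((0 : Fin b)).val = 0 by simp), hcadd]
    have h01 : u (i - 1, (0 : Fin b)) = -(c i) * xi / t := by
      rw [hu (i - 1) 0, if_pos (show ((0 : Fin b)).val = 0 by simp), hcsub]
    rw [hrow, hua, h00, h01, if_pos ha, hdeg, ← ht_def, hva]
    have hkey : 1 / t * (((b : ℝ) - 1) / s - 2 * xi / t) = lam * xi := by
      rw [← h1, ← ht2]; ring
    linear_combination (c i) * hkey
  · have hdeg : rocDeg b q (i, a) = (b : ℝ) - 1 := by simp [rocDeg, ha]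
    have hva : v (i, a) = c i := by
      simp only [hv_def, vkron, blockVec]; rw [if_neg ha]; ring
    have hua : u (i, a) = c i / s := by rw [hu i a, if_neg ha]
    rw [hrow, hua, if_neg ha, hdeg, ← hs_def, hva]
    have hkey : 1 / s * (xi / t + ((b : ℝ) - 2) / s) = lam := by
      rw [← h2, ← hs2]; ring
    linear_combination (c i) * hkey

private lemma roc_h (b q : ℕ) (hb : 3 ≤ b) (hq : 4 ≤ q) (hqe : Even q) (xi : ℝ)
    (hquad : xi ^ 2 = 2 * rocBeta b q (q / 2) * xi + ((b : ℝ) - 1)) :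
    (((b : ℝ) - 1) / (Real.sqrt ((b : ℝ) - 1) * Real.sqrt ((b : ℝ) + 1))
        - 2 * xi / ((b : ℝ) + 1)
      = (xi / Real.sqrt ((b : ℝ) ^ 2 - 1) + 1 - 1 / ((b : ℝ) - 1)) * xi) ∧
    (xi / (Real.sqrt ((b : ℝ) - 1) * Real.sqrt ((b : ℝ) + 1)) + ((b : ℝ) - 2) / ((b : ℝ) - 1)
      = xi / Real.sqrt ((b : ℝ) ^ 2 - 1) + 1 - 1 / ((b : ℝ) - 1)) := by
  have hbR : (3 : ℝ) ≤ (b : ℝ) := by exact_mod_cast hb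
  set beta := rocBeta b q (q / 2) with hbeta_def
  set s := Real.sqrt ((b : ℝ) - 1) with hs_def
  set t := Real.sqrt ((b : ℝ) + 1) with ht_def
  have hs_pos : 0 < s := Real.sqrt_pos.mpr (by linarith)
  have ht_pos : 0 < t := Real.sqrt_pos.mpr (by linarith)
  have hs2 : s ^ 2 = (b : ℝ) - 1 := Real.sq_sqrt (by linarith)
  have ht2 : t ^ 2 = (b : ℝ) + 1 := Real.sq_sqrt (by linarith)
  have hst : Real.sqrt ((b : ℝ) ^ 2 - 1) = s * t := by
    rw [show (b : ℝ) ^ 2 - 1 = ((b : ℝ) - 1) * ((b : ℝ) + 1) by ring,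
      Real.sqrt_mul (by linarith), hs_def, ht_def]
  have hbeta : beta = (1 / 2) * ((-2) * (s / t) - s * t + t / s) := by
    rw [hbeta_def]
    unfold rocBeta
    rw [roc_alpha_half q (by omega) hqe,
      Real.sqrt_div (show (0 : ℝ) ≤ (b : ℝ) - 1 by linarith),
      Real.sqrt_div (show (0 : ℝ) ≤ (b : ℝ) + 1 by linarith), hst, ← hs_def, ← ht_def]
  have hs0 : s ≠ 0 := ne_of_gt hs_pos
  have ht0 : t ≠ 0 := ne_of_gt ht_pos
  rw [← hs2] at hquad
  constructor
  · have hbeta' : 2 * beta * (s * t) = -2 * s ^ 2 - s ^ 2 * t ^ 2 + t ^ 2 := by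
      rw [hbeta]; field_simp
    rw [hst, ← hs2, ← ht2]
    field_simp
    linear_combination (-(s * t)) * hquad + (-xi) * hbeta'
  · rw [hst, ← hs2]
    field_simp
    linear_combination (-t) * hs2

/-- For `q` even and `k = q/2` (so `α_{q/2} = −2` and
`c^{q/2,q}_j = (−1)^j`), the vectors `c^{q/2,q} ⊗ (ξᵢ^{(q/2)}e₁ + g₁)` (`i = 1,2`)
are nonzero eigenvectors of `Â` for the eigenvalues `λᵢ^{(q/2)}`. -/
theorem roc_most_oscillatory_eigenpairs (b q : ℕ) (hb : 3 ≤ b) (hq : 4 ≤ q)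
    (hqeven : Even q) :
    (vkron (cvec q (q / 2)) (blockVec b (rocXi1 b q (q / 2))) ≠ 0 ∧
     vkron (cvec q (q / 2)) (blockVec b (rocXi2 b q (q / 2))) ≠ 0) ∧
    (∀ j : Fin q, cvec q (q / 2) j = (-1 : ℝ) ^ (j.val + 1)) ∧
    rocAlpha q (q / 2) = -2 ∧
    (rocAhat b q).mulVec (vkron (cvec q (q / 2)) (blockVec b (rocXi1 b q (q / 2)))) =
      rocLam1 b q (q / 2) • vkron (cvec q (q / 2)) (blockVec b (rocXi1 b q (q / 2))) ∧
    (rocAhat b q).mulVec (vkron (cvec q (q / 2)) (blockVec b (rocXi2 b q (q / 2)))) =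
      rocLam2 b q (q / 2) • vkron (cvec q (q / 2)) (blockVec b (rocXi2 b q (q / 2))) := by
  have hbR : (3 : ℝ) ≤ (b : ℝ) := by exact_mod_cast hb
  have hquad1 : (rocXi1 b q (q / 2)) ^ 2
      = 2 * rocBeta b q (q / 2) * rocXi1 b q (q / 2) + ((b : ℝ) - 1) := by
    have hge : 0 ≤ (rocBeta b q (q / 2)) ^ 2 + ((b : ℝ) - 1) := by
      nlinarith [sq_nonneg (rocBeta b q (q / 2))]
    have hr := Real.sq_sqrt hge
    unfold rocXi1
    linear_combination hr
  have hquad2 : (rocXi2 b q (q / 2)) ^ 2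
      = 2 * rocBeta b q (q / 2) * rocXi2 b q (q / 2) + ((b : ℝ) - 1) := by
    have hge : 0 ≤ (rocBeta b q (q / 2)) ^ 2 + ((b : ℝ) - 1) := by
      nlinarith [sq_nonneg (rocBeta b q (q / 2))]
    have hr := Real.sq_sqrt hge
    unfold rocXi2
    linear_combination hr
  have hh1 := roc_h b q hb hq hqeven _ hquad1
  have hh2 := roc_h b q hb hq hqeven _ hquad2
  have hnz : ∀ xi : ℝ, vkron (cvec q (q / 2)) (blockVec b xi) ≠ 0 := by
    intro xi h0
    have := congrFun h0 (⟨0, by omega⟩, ⟨1, by omega⟩)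
    rw [Pi.zero_apply] at this
    unfold vkron blockVec at this
    rw [roc_cvec_half q (by omega) hqeven] at this
    norm_num at this
  refine ⟨⟨hnz _, hnz _⟩, fun j => roc_cvec_half q (by omega) hqeven j,
    roc_alpha_half q (by omega) hqeven, ?_, ?_⟩
  · exact roc_eig b q hb hq hqeven _ _
      (by unfold rocLam1; exact hh1.1) (by unfold rocLam1; exact hh1.2)
  · exact roc_eig b q hb hq hqeven _ _
      (by unfold rocLam2; exact hh2.1) (by unfold rocLam2; exact hh2.2)
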